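/- Let φ : ℝ × ℝ → ℝ satisfy φ(0, x) = x and φ(s + t, x) = φ(s, φ(t, x)) for all s, t, x (a global flow), let g : ℝ → ℝ be continuous and bounded with s ↦ g(φ(s, x)) continuous for each x, and let γ > 0. Define τ(x) := γ∫_{−∞}^0 e^{γs}·g(φ(s, x)) ds. Then for all x₀ ∈ ℝ and all t ∈ ℝ, τ(φ(t, x₀)) = e^{−γt}·τ(x₀) + γ∫₀^t e^{−γ(t − s)}·g(φ(s, x₀)) ds. In particular, the function t ↦ τ(φ(t, x₀)) is the variation-of-constants solution of ẏ = −γy + γ·g(φ(t, x₀)) with y(0) = τ(x₀), so the graph of τ is invariant for the cascade. (Graph-invariance identity in the proof of Lemma 2.) -/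

import Mathlib

open MeasureTheory Real

open Set in
lemma integrableOn_exp_mul_Iic' {γ : ℝ} (hγ : 0 < γ) (c : ℝ) :
    IntegrableOn (fun s => Real.exp (γ * s)) (Set.Iic c) := by
  refine integrableOn_Iic_of_intervalIntegral_norm_bounded (Real.exp (γ * c) / γ) c
    (fun y => ((Real.continuous_exp.comp (continuous_const.mul continuous_id)).intervalIntegrable
      y c).1) Filter.tendsto_id ?_
  filter_upwards with y
  have : (∫ x in y..c, ‖Real.exp (γ * x)‖) = ∫ x in y..c, Real.exp (γ * x) := by
    congr 1; ext x; exact Real.norm_of_nonneg (Real.exp_pos _).le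
  rw [this]
  have h1 : (∫ x in y..c, Real.exp (γ * x)) = γ⁻¹ • ∫ x in γ * y..γ * c, Real.exp x :=
    intervalIntegral.integral_comp_mul_left Real.exp hγ.ne'
  rw [h1, integral_exp, smul_eq_mul, div_eq_inv_mul]
  gcongr
  linarith [Real.exp_pos (γ * y)]

lemma integrableOn_aux {γ : ℝ} (hγ : 0 < γ) {h : ℝ → ℝ} (hc : Continuous h)
    {M : ℝ} (hM : ∀ y, |h y| ≤ M) (c : ℝ) :
    IntegrableOn (fun s => Real.exp (γ * s) * h s) (Set.Iic c) := by
  refine Integrable.mono' ((integrableOn_exp_mul_Iic' hγ c).const_mul M)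
    ((Real.continuous_exp.comp (continuous_const.mul continuous_id)).mul
      hc).aestronglyMeasurable ?_
  filter_upwards with s
  rw [Real.norm_eq_abs, abs_mul, abs_of_pos (Real.exp_pos _)]
  calc Real.exp (γ * s) * |h s| ≤ Real.exp (γ * s) * M := by
        exact mul_le_mul_of_nonneg_left (hM s) (Real.exp_pos _).le
    _ = M * Real.exp (γ * s) := mul_comm _ _

/-- Graph-invariance identity in the proof of Lemma 2: along the flow `φ`, the function
`τ(x) = γ∫_{−∞}^0 e^{γs} g(φ(s,x)) ds` satisfies the variation-of-constants identity for
`ẏ = −γy + γ g(φ(t, x₀))`, so the graph of `τ` is invariant for the cascade. -/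
theorem stmt19
    (φ : ℝ → ℝ → ℝ) (g : ℝ → ℝ) (γ : ℝ) (hγ : 0 < γ)
    (hflow0 : ∀ x : ℝ, φ 0 x = x)
    (hflow : ∀ s t x : ℝ, φ (s + t) x = φ s (φ t x))
    (hgc : Continuous g)
    (hgb : ∃ M : ℝ, ∀ y : ℝ, |g y| ≤ M)
    (hcont : ∀ x : ℝ, Continuous fun s => g (φ s x))
    (tau : ℝ → ℝ)
    (htau : ∀ x : ℝ, tau x = γ * ∫ s in Set.Iic (0:ℝ), Real.exp (γ * s) * g (φ s x)) :
    ∀ x₀ t : ℝ,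
      tau (φ t x₀) =
        Real.exp (-(γ * t)) * tau x₀ +
          γ * ∫ s in (0:ℝ)..t, Real.exp (-(γ * (t - s))) * g (φ s x₀) := by
  intro x₀ t
  obtain ⟨M, hM⟩ := hgb
  set F : ℝ → ℝ := fun s => Real.exp (γ * s) * g (φ s x₀) with hF
  have hFint : ∀ c : ℝ, IntegrableOn F (Set.Iic c) :=
    fun c => integrableOn_aux hγ (hcont x₀) (fun y => hM _) c
  -- change of variables: translation by t
  have hmp : MeasurePreserving (fun s : ℝ => s + t) volume volume :=
    measurePreserving_add_right volume t
  have hemb : MeasurableEmbedding (fun s : ℝ => s + t) :=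
    (MeasurableEquiv.addRight t).measurableEmbedding
  have hpre : (fun s : ℝ => s + t) ⁻¹' Set.Iic t = Set.Iic 0 := by
    ext s; simp [Set.mem_Iic]
  have hcov : (∫ s in Set.Iic (0:ℝ), F (s + t)) = ∫ s in Set.Iic t, F s := by
    rw [← hpre]
    exact hmp.setIntegral_preimage_emb hemb F (Set.Iic t)
  -- rewrite τ(φ t x₀)
  have key : tau (φ t x₀) = γ * (Real.exp (-(γ * t)) * ∫ s in Set.Iic t, F s) := by
    rw [htau]
    congr 1
    rw [← hcov]
    rw [← integral_const_mul]
    congr 1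
    ext s
    rw [hF]
    simp only [← hflow s t x₀]
    rw [← mul_assoc, ← Real.exp_add]
    ring_nf
  -- split the Iic t integral
  have hsplit : (∫ s in Set.Iic t, F s) = (∫ s in Set.Iic (0:ℝ), F s) + ∫ s in (0:ℝ)..t, F s := by
    have := intervalIntegral.integral_Iic_sub_Iic (hFint 0) (hFint t)
    linarith
  -- rewrite the interval integral on RHS
  have hrhs : (∫ s in (0:ℝ)..t, Real.exp (-(γ * (t - s))) * g (φ s x₀))
      = Real.exp (-(γ * t)) * ∫ s in (0:ℝ)..t, F s := by
    rw [← intervalIntegral.integral_const_mul]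
    congr 1
    ext s
    rw [hF, ← mul_assoc, ← Real.exp_add]
    ring_nf
  rw [key, hsplit, htau, hrhs]
  ring
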